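/- Let X and W be symmetric positive semidefinite p×p matrices with W X = 0 and X + W positive definite, and let Y be a symmetric p×p matrix satisfying X Y + Y X = 0 and Y W + W Y = 0. Then Y = 0. -/

import Mathlib

open Matrix

theorem stmt3 (p : ℕ) (X W Y : Matrix (Fin p) (Fin p) ℝ)
    (hX : X.PosSemidef) (hW : W.PosSemidef) (hWX : W * X = 0)
    (hpd : (X + W).PosDef)
    (hY : Y.IsSymm) (hXY : X * Y + Y * X = 0) (hYW : Y * W + W * Y = 0) :
    Y = 0 := by
  set S := X + W with hS
  have hYH : Yᴴ = Y := by
    simpa [conjTranspose_eq_transpose_of_trivial, Matrix.IsSymm] using hY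
  -- anticommutation
  have hanti : S * Y = -(Y * S) := by
    have h : S * Y + Y * S = (X * Y + Y * X) + (Y * W + W * Y) := by
      rw [hS]; noncomm_ring
    rw [hXY, hYW, add_zero] at h
    exact eq_neg_of_add_eq_zero_left h
  -- M = Y * S * Y is PSD with trace 0
  set M := Y * S * Y with hM
  have hMpsd : M.PosSemidef := by
    have := hpd.posSemidef.mul_mul_conjTranspose_same Y
    rwa [hYH] at this
  have htr : M.trace = 0 := by
    have h1 : M.trace = -M.trace := by
      calc M.trace = ((S * Y) * Y).trace := by rw [hM, mul_assoc, trace_mul_comm]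
        _ = -M.trace := by rw [hanti, hM]; simp [mul_assoc]
    linarith
  -- PSD with trace zero is zero
  have hdiag : ∀ i, M i i = 0 := by
    have hnn : ∀ i ∈ Finset.univ, 0 ≤ M i i := by
      intro i _
      simpa [Matrix.mulVec_single, dotProduct, Pi.single_apply] using hMpsd.dotProduct_mulVec_nonneg (Pi.single i 1)
    have hsum : ∑ i, M i i = 0 := htr
    intro i
    exact (Finset.sum_eq_zero_iff_of_nonneg hnn).mp hsum i (Finset.mem_univ i)
  have hMv : ∀ i, M *ᵥ Pi.single i 1 = 0 := by
    intro i
    apply (hMpsd.dotProduct_mulVec_zero_iff (Pi.single i 1)).mp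
    simpa [Matrix.mulVec_single, dotProduct, Pi.single_apply] using hdiag i
  have hM0 : M = 0 := by
    ext j i
    have := congrFun (hMv i) j
    simpa [Matrix.mulVec_single] using this
  -- conclude Y = 0
  have hYv : ∀ v, Y *ᵥ v = 0 := by
    intro v
    by_contra h
    have hpos := hpd.dotProduct_mulVec_pos h
    have hz : star (Y *ᵥ v) ⬝ᵥ S *ᵥ (Y *ᵥ v) = 0 := by
      have key : Yᴴ * (S * Y) = M := by rw [hYH, hM, mul_assoc]
      rw [star_mulVec, mulVec_mulVec, dotProduct_mulVec, vecMul_vecMul, key, hM0]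
      simp
    rw [hz] at hpos
    exact lt_irrefl 0 hpos
  ext j i
  have := congrFun (hYv (Pi.single i 1)) j
  simpa [Matrix.mulVec_single] using this
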